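/- Let A ⊆ ℂᵈ be a nonempty compact set that is closed under multiplication by unit-modulus complex scalars and whose real linear span is all of ℂᵈ (viewing ℂᵈ as a real vector space). Let α > 0, η > 0, and ĥ ∈ ℂᵈ. Then inf_{h ∈ ℂᵈ} [ (α/2)‖ĥ − h‖² + η·gauge(conv A)(h) ] = inf [ (α/2)‖ĥ − Σ_{i=1}^{L} cᵢ aᵢ‖² + η·Σ_{i=1}^{L} cᵢ ], where the right-hand infimum runs over all L ∈ ℕ, all c₁,…,c_L ≥ 0, and all a₁,…,a_L ∈ A. -/

import Mathlib

open Set Finset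

lemma gauge_sum_le' {E : Type*} [NormedAddCommGroup E] [NormedSpace ℝ E]
    {s : Set E} (hs : Convex ℝ s) (habs : Absorbent ℝ s)
    {ι : Type*} (t : Finset ι) (c : ι → ℝ) (a : ι → E)
    (hc : ∀ i, 0 ≤ c i) (ha : ∀ i, a i ∈ s) :
    gauge s (∑ i ∈ t, c i • a i) ≤ ∑ i ∈ t, c i := by
  induction t using Finset.cons_induction with
  | empty => simp
  | cons j t hj ih =>
    rw [Finset.sum_cons, Finset.sum_cons]
    calc gauge s (c j • a j + ∑ i ∈ t, c i • a i)
        ≤ gauge s (c j • a j) + gauge s (∑ i ∈ t, c i • a i) := gauge_add_le hs habs _ _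
      _ ≤ c j * 1 + ∑ i ∈ t, c i := by
          refine add_le_add ?_ ih
          rw [gauge_smul_of_nonneg (hc j)]
          exact mul_le_mul_of_nonneg_left (gauge_le_one_of_mem (ha j)) (hc j)
      _ = c j + ∑ i ∈ t, c i := by ring

/-- Equivalence between the atomic norm denoising proximal problem (34) and its
mixed atomic-decomposition reformulation (36). -/
theorem stmt8 {d : ℕ} (A : Set (EuclideanSpace ℂ (Fin d))) (hne : A.Nonempty)
    (hcpt : IsCompact A)
    (hrot : ∀ a ∈ A, ∀ θ : ℂ, ‖θ‖ = 1 → θ • a ∈ A)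
    (hspan : Submodule.span ℝ A = ⊤)
    (α η : ℝ) (hα : 0 < α) (hη : 0 < η) (hhat : EuclideanSpace ℂ (Fin d)) :
    (⨅ h : EuclideanSpace ℂ (Fin d),
        (α / 2 * ‖hhat - h‖ ^ 2 + η * gauge (convexHull ℝ A) h)) =
      sInf {r : ℝ | ∃ (L : ℕ) (c : Fin L → ℝ) (a : Fin L → EuclideanSpace ℂ (Fin d)),
        (∀ i, 0 ≤ c i) ∧ (∀ i, a i ∈ A) ∧
          r = α / 2 * ‖hhat - ∑ i, c i • a i‖ ^ 2 + η * ∑ i, c i} := by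
  set S := convexHull ℝ A with hSdef
  have hSc : Convex ℝ S := convex_convexHull ℝ A
  -- A is symmetric under negation
  have hneg : ∀ a ∈ A, -a ∈ A := by
    intro a ha
    have := hrot a ha (-1) (by simp)
    simpa using this
  -- 0 ∈ S
  obtain ⟨a₀, ha₀⟩ := hne
  have h0S : (0 : EuclideanSpace ℂ (Fin d)) ∈ S := by
    have h1 : a₀ ∈ S := subset_convexHull ℝ A ha₀
    have h2 : -a₀ ∈ S := subset_convexHull ℝ A (hneg a₀ ha₀)
    have := hSc h1 h2 (by norm_num : (0:ℝ) ≤ 1/2) (by norm_num : (0:ℝ) ≤ 1/2) (by norm_num)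
    simpa using this
  -- affine span of S is top
  have haff : affineSpan ℝ S = ⊤ := by
    apply top_unique
    have h1 : (affineSpan ℝ (insert 0 A) : Set (EuclideanSpace ℂ (Fin d))) = (Submodule.span ℝ A : Set (EuclideanSpace ℂ (Fin d))) :=
      affineSpan_insert_zero A
    have h2 : (affineSpan ℝ (insert 0 A) : Set (EuclideanSpace ℂ (Fin d))) = Set.univ := by
      rw [h1, hspan]; rfl
    have h3 : affineSpan ℝ (insert 0 A) = ⊤ := by
      ext x; simp [← AffineSubspace.mem_coe, h2]
    rw [← h3]
    apply affineSpan_mono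
    intro x hx
    rcases hx with rfl | hx
    · exact h0S
    · exact subset_convexHull ℝ A hx
  -- 0 is in the interior of S, so S is absorbent
  have hint : (interior S).Nonempty := by
    rw [hSc.interior_nonempty_iff_affineSpan_eq_top]; exact haff
  obtain ⟨x, hx⟩ := hint
  have hnegx : -x ∈ S := by
    have hxS : x ∈ S := interior_subset hx
    -- -S = S since A is symmetric
    have hAneg : -A = A := by
      apply Set.Subset.antisymm
      · intro y hy
        rw [Set.mem_neg] at hy
        simpa using hneg _ hy
      · intro y hy
        rw [Set.mem_neg]
        exact hneg y hy
    have hSS : -S = S := by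
      rw [hSdef, ← convexHull_neg, hAneg]
    rw [← hSS, Set.mem_neg, neg_neg]
    exact hxS
  have h0int : (0 : EuclideanSpace ℂ (Fin d)) ∈ interior S := by
    have := hSc.combo_interior_self_mem_interior hx hnegx
      (by norm_num : (0:ℝ) < 1/2) (by norm_num : (0:ℝ) ≤ 1/2) (by norm_num)
    simpa using this
  have habs : Absorbent ℝ S := absorbent_nhds_zero (mem_interior_iff_mem_nhds.mp h0int)
  set RHS := {r : ℝ | ∃ (L : ℕ) (c : Fin L → ℝ) (a : Fin L → EuclideanSpace ℂ (Fin d)),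
        (∀ i, 0 ≤ c i) ∧ (∀ i, a i ∈ A) ∧
          r = α / 2 * ‖hhat - ∑ i, c i • a i‖ ^ 2 + η * ∑ i, c i} with hRHS
  have hRne : RHS.Nonempty := by
    refine ⟨α / 2 * ‖hhat - ∑ i : Fin 0, (0:ℝ) • (0 : EuclideanSpace ℂ (Fin d))‖ ^ 2 + η * ∑ i : Fin 0, (0:ℝ),
      0, 0, 0, fun i => le_refl 0, fun i => i.elim0, ?_⟩
    simp
  have hRbdd : BddBelow RHS := by
    refine ⟨0, fun r hr => ?_⟩
    obtain ⟨L, c, a, hc, ha, rfl⟩ := hr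
    have h1 : 0 ≤ α / 2 * ‖hhat - ∑ i, c i • a i‖ ^ 2 :=
      mul_nonneg (by positivity) (by positivity)
    have h2 : 0 ≤ η * ∑ i, c i :=
      mul_nonneg hη.le (Finset.sum_nonneg fun i _ => hc i)
    linarith
  have hfbdd : BddBelow (Set.range fun h : EuclideanSpace ℂ (Fin d) =>
      α / 2 * ‖hhat - h‖ ^ 2 + η * gauge S h) := by
    refine ⟨0, fun r hr => ?_⟩
    obtain ⟨h, rfl⟩ := hr
    have h1 : 0 ≤ α / 2 * ‖hhat - h‖ ^ 2 := mul_nonneg (by positivity) (by positivity)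
    have h2 : 0 ≤ η * gauge S h := mul_nonneg hη.le (gauge_nonneg h)
    linarith
  apply le_antisymm
  · -- LHS ≤ RHS
    apply le_csInf hRne
    rintro r ⟨L, c, a, hc, ha, rfl⟩
    refine ciInf_le_of_le hfbdd (∑ i, c i • a i) ?_
    have hg : gauge S (∑ i, c i • a i) ≤ ∑ i, c i :=
      gauge_sum_le' hSc habs Finset.univ c a hc (fun i => subset_convexHull ℝ A (ha i))
    have := mul_le_mul_of_nonneg_left hg hη.le
    linarith
  · -- RHS ≤ LHS
    apply le_ciInf
    intro h
    apply le_of_forall_pos_le_add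
    intro ε hε
    -- find b with gauge S h ≤ something and h ∈ b • S
    have hlt : gauge S h < gauge S h + ε / η := by
      have : 0 < ε / η := div_pos hε hη
      linarith
    obtain ⟨b, hb0, hbe, hbmem⟩ := exists_lt_of_gauge_lt habs hlt
    obtain ⟨y, hyS, hyeq⟩ := hbmem
    rw [hSdef, mem_convexHull_iff_exists_fintype] at hyS
    obtain ⟨ι, _, w, z, hw0, hw1, hzA, hzsum⟩ := hyS
    -- reindex by Fin (card ι)
    let e := (Fintype.equivFin ι).symm
    set L := Fintype.card ι
    set c : Fin L → ℝ := fun i => b * w (e i) with hcdef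
    set aa : Fin L → EuclideanSpace ℂ (Fin d) := fun i => z (e i) with haadef
    have hcnn : ∀ i, 0 ≤ c i := fun i => mul_nonneg hb0.le (hw0 _)
    have haA : ∀ i, aa i ∈ A := fun i => hzA _
    have hsum1 : (∑ i, c i • aa i) = h := by
      rw [hcdef]
      calc ∑ i : Fin L, (b * w (e i)) • z (e i)
          = ∑ i : ι, (b * w i) • z i := Fintype.sum_equiv e _ _ (fun i => rfl)
        _ = b • ∑ i : ι, w i • z i := by
            rw [Finset.smul_sum]; congr 1; ext i; rw [mul_smul]
        _ = h := by rw [hzsum, ← hyeq]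
    have hsum2 : (∑ i, c i) = b := by
      rw [hcdef]
      calc ∑ i : Fin L, b * w (e i) = ∑ i : ι, b * w i := Fintype.sum_equiv e _ _ (fun i => rfl)
        _ = b * ∑ i, w i := by rw [Finset.mul_sum]
        _ = b := by rw [hw1, mul_one]
    have hmem : α / 2 * ‖hhat - ∑ i, c i • aa i‖ ^ 2 + η * ∑ i, c i ∈ RHS :=
      ⟨L, c, aa, hcnn, haA, rfl⟩
    refine (csInf_le hRbdd hmem).trans ?_
    rw [hsum1, hsum2]
    have : η * b ≤ η * gauge S h + ε := by
      have := mul_le_mul_of_nonneg_left hbe.le hη.le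
      rw [mul_add, mul_div_cancel₀ _ hη.ne'] at this
      linarith
    linarith
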